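/- Fix integers p ≥ 1 and N ≥ 1, a partition x_0 < x_1 < ⋯ < x_N, and data y_{n,2k} ∈ ℝ (0 ≤ n ≤ N, 0 ≤ k ≤ p). Let α', α'' ∈ Θ_{2p}, and let ℓ_{α'} and ℓ_{α''} be continuous functions on [x_0,x_N] satisfying ℓ_{α'}(L_n(x)) = α'_n ℓ_{α'}(x) + q_n(α'_n, x) and ℓ_{α''}(L_n(x)) = α''_n ℓ_{α''}(x) + q_n(α''_n, x) for all x ∈ [x_0,x_N] and 1 ≤ n ≤ N. Then ‖ℓ_{α'} − ℓ_{α''}‖_∞ ≤ (|α' − α''|_∞ / (1 − |α'|_∞)) · (‖ℓ_{α''}‖_∞ + M_{0,2p}), where |α|_∞ = max_n |α_n|, ‖·‖_∞ denotes the supremum norm over [x_0,x_N], and M_{0,2p} = (2ρπ/3) Σ_{l=0}^{p} ((x_N − x_0)/π)^{2l}. -/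

import Mathlib

open Polynomial

private lemma lfsc_sub_cube_le_sin {x : ℝ} (hx : 0 ≤ x) : x - x ^ 3 / 6 ≤ Real.sin x := by
  have key : MonotoneOn (fun x : ℝ => Real.sin x - x + x ^ 3 / 6) (Set.Ici 0) := by
    have hder : ∀ t : ℝ, HasDerivAt (fun x : ℝ => Real.sin x - x + x ^ 3 / 6)
        (Real.cos t - 1 + t ^ 2 / 2) t := by
      intro t
      have h1 : HasDerivAt (fun x : ℝ => Real.sin x - x + x ^ 3 / 6)
          (Real.cos t - 1 + (↑(3:ℕ) * t ^ (3-1)) / 6) t :=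
        ((Real.hasDerivAt_sin t).sub (hasDerivAt_id t)).add ((hasDerivAt_pow 3 t).div_const 6)
      convert h1 using 1
      norm_num
      ring
    apply monotoneOn_of_deriv_nonneg (convex_Ici 0)
    · exact (Continuous.continuousOn (by continuity))
    · intro t _
      exact (hder t).differentiableAt.differentiableWithinAt
    · intro t _
      rw [(hder t).deriv]
      nlinarith [Real.one_sub_sq_div_two_le_cos (x := t)]
  have h0 : (0:ℝ) ∈ Set.Ici (0:ℝ) := Set.mem_Ici.mpr le_rfl
  have := key h0 (Set.mem_Ici.mpr hx) hx
  simp at this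
  nlinarith [this]

private lemma lfsc_half_case {u : ℝ} (h0 : 0 ≤ u) (h1 : u ≤ 1/2) :
    Real.pi * (u * (1 - u)) ≤ Real.sin (Real.pi * u) := by
  have hπ3 : (3:ℝ) < Real.pi := Real.pi_gt_three
  have hπ4 : Real.pi < 3.15 := by
    have := Real.pi_lt_d2
    linarith
  have hx : 0 ≤ Real.pi * u := by positivity
  have := lfsc_sub_cube_le_sin hx
  have hu2 : 0 ≤ Real.pi * u ^ 2 := by positivity
  have h6 : Real.pi ^ 2 * u ≤ 6 := by
    nlinarith [mul_le_mul_of_nonneg_left h1 (sq_nonneg Real.pi)]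
  have hkey : Real.pi * (u * (1 - u)) ≤ Real.pi * u - (Real.pi * u) ^ 3 / 6 := by
    nlinarith [mul_nonneg hu2 (by linarith : (0:ℝ) ≤ 6 - Real.pi ^ 2 * u)]
  linarith

private lemma lfsc_sin_lower {u : ℝ} (h0 : 0 ≤ u) (h1 : u ≤ 1) :
    Real.pi * (u * (1 - u)) ≤ Real.sin (Real.pi * u) := by
  rcases le_total u (1/2) with h | h
  · exact lfsc_half_case h0 h
  · have hv := lfsc_half_case (u := 1 - u) (by linarith) (by linarith)
    have : Real.sin (Real.pi * (1 - u)) = Real.sin (Real.pi * u) := by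
      rw [show Real.pi * (1 - u) = Real.pi - Real.pi * u by ring, Real.sin_pi_sub]
    rw [this] at hv
    calc Real.pi * (u * (1 - u)) = Real.pi * ((1-u) * (1 - (1-u))) := by ring
    _ ≤ _ := hv

private lemma lfsc_iteratedDeriv_polyeval (P : Polynomial ℝ) (n : ℕ) :
    iteratedDeriv n (fun t => P.eval t) = fun t => (Polynomial.derivative^[n] P).eval t := by
  induction n generalizing P with
  | zero => simp [iteratedDeriv_zero]
  | succ m ih =>
      rw [iteratedDeriv_succ']
      have : (deriv fun t => P.eval t) = fun t => (Polynomial.derivative P).eval t := by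
        funext t; exact Polynomial.deriv P
      rw [this, ih]
      funext t
      rw [Function.iterate_succ_apply]

private lemma lfsc_nonneg_of_concave {a b : ℝ} {w : ℝ → ℝ} (hw : ConcaveOn ℝ (Set.Icc a b) w)
    (ha : 0 ≤ w a) (hb : 0 ≤ w b) : ∀ t ∈ Set.Icc a b, 0 ≤ w t := by
  intro t ht
  rcases eq_or_lt_of_le (ht.1.trans ht.2 : a ≤ b) with h | hab
  · have : t = a := le_antisymm (h ▸ ht.2) ht.1
    rwa [this]
  · set μ := (b - t) / (b - a) with hμ
    set ν := (t - a) / (b - a) with hν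
    have hμ0 : 0 ≤ μ := by apply div_nonneg <;> linarith [ht.1, ht.2]
    have hν0 : 0 ≤ ν := by apply div_nonneg <;> linarith [ht.1, ht.2]
    have hba : (b:ℝ) - a ≠ 0 := by linarith
    have hsum : μ + ν = 1 := by
      rw [hμ, hν, ← add_div, div_eq_one_iff_eq hba]; ring
    have hconv : μ • a + ν • b = t := by
      rw [smul_eq_mul, smul_eq_mul, hμ, hν, div_mul_eq_mul_div, div_mul_eq_mul_div,
        ← add_div, div_eq_iff hba]
      ring
    have := hw.2 (Set.left_mem_Icc.mpr hab.le) (Set.right_mem_Icc.mpr hab.le) hμ0 hν0 hsum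
    rw [hconv] at this
    have h1 : 0 ≤ μ • w a + ν • w b := by
      apply add_nonneg <;> [exact mul_nonneg hμ0 ha; exact mul_nonneg hν0 hb]
    linarith

private lemma lfsc_concave_aux (a b ρ K c : ℝ) (P : Polynomial ℝ)
    (hbound : ∀ t ∈ Set.Icc a b,
      (Polynomial.derivative^[2] P).eval t ≤ ρ + (K * c ^ 2) * Real.sin (c * (t - a))) :
    ConcaveOn ℝ (Set.Icc a b)
      (fun t => ρ + ρ/2 * ((t - a) * (b - t)) + K * Real.sin (c * (t - a)) + P.eval t) := by
  have hinner : ∀ t : ℝ, HasDerivAt (fun t : ℝ => c * (t - a)) c t := by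
    intro t
    have := ((hasDerivAt_id t).sub_const a).const_mul c
    simpa using this
  have hw1 : ∀ t : ℝ, HasDerivAt
      (fun t => ρ + ρ/2 * ((t - a) * (b - t)) + K * Real.sin (c * (t - a)) + P.eval t)
      (ρ/2 * ((b - t) - (t - a)) + K * (Real.cos (c * (t - a)) * c)
        + (derivative P).eval t) t := by
    intro t
    have hquad : HasDerivAt (fun t : ℝ => (t - a) * (b - t)) (1 * (b - t) + (t - a) * (0 - 1)) t :=
      ((hasDerivAt_id t).sub_const a).mul ((hasDerivAt_const t b).sub (hasDerivAt_id t))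
    have hsin : HasDerivAt (fun t : ℝ => Real.sin (c * (t - a)))
        (Real.cos (c * (t - a)) * c) t := (Real.hasDerivAt_sin _).comp t (hinner t)
    have := (((hasDerivAt_const t ρ).add (hquad.const_mul (ρ/2))).add
      (hsin.const_mul K)).add (P.hasDerivAt t)
    refine this.congr_deriv ?_
    ring
  have hw2 : ∀ t : ℝ, HasDerivAt
      (fun t => ρ/2 * ((b - t) - (t - a)) + K * (Real.cos (c * (t - a)) * c)
        + (derivative P).eval t)
      (-ρ - (K * c ^ 2) * Real.sin (c * (t - a)) + (Polynomial.derivative^[2] P).eval t) t := by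
    intro t
    have hlin : HasDerivAt (fun t : ℝ => (b - t) - (t - a)) ((0 - 1) - 1) t :=
      ((hasDerivAt_const t b).sub (hasDerivAt_id t)).sub ((hasDerivAt_id t).sub_const a)
    have hcos : HasDerivAt (fun t : ℝ => Real.cos (c * (t - a)))
        (-Real.sin (c * (t - a)) * c) t := (Real.hasDerivAt_cos _).comp t (hinner t)
    have := ((hlin.const_mul (ρ/2)).add ((hcos.mul_const c).const_mul K)).add
      ((derivative P).hasDerivAt t)
    refine this.congr_deriv ?_
    simp [Function.iterate_succ_apply']
    ring
  apply concaveOn_of_hasDerivWithinAt2_nonpos (convex_Icc a b)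
  · apply Continuous.continuousOn
    have : Continuous (fun t : ℝ => P.eval t) := P.continuous
    continuity
  · exact fun t _ => (hw1 t).hasDerivWithinAt
  · exact fun t _ => (hw2 t).hasDerivWithinAt
  · intro t ht
    rw [interior_Icc] at ht
    have := hbound t ⟨ht.1.le, ht.2.le⟩
    linarith

private lemma lfsc_geom (r : ℝ) (k : ℕ) :
    ∑ l ∈ Finset.Icc 1 (k+1), r^l = r + r * ∑ l ∈ Finset.Icc 1 k, r^l := by
  induction k with
  | zero => simp
  | succ k ih =>
      rw [Finset.sum_Icc_succ_top (by omega : 1 ≤ k + 1 + 1)]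
      nth_rewrite 1 [ih]
      rw [Finset.sum_Icc_succ_top (by omega : 1 ≤ k + 1)]
      ring

private lemma lfsc_key (a b ρ : ℝ) (hab : a < b) (hρ : 0 ≤ ρ) :
    ∀ (k : ℕ) (P : Polynomial ℝ), P.natDegree ≤ 2*k+1 →
    (∀ l, l ≤ k → |(Polynomial.derivative^[2*l] P).eval a| ≤ ρ ∧
      |(Polynomial.derivative^[2*l] P).eval b| ≤ ρ) →
    ∀ t ∈ Set.Icc a b, |P.eval t| ≤
      ρ + (ρ * Real.pi / 2) * (∑ l ∈ Finset.Icc 1 k, ((b-a)/Real.pi)^(2*l)) *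
        Real.sin (Real.pi/(b-a) * (t - a)) := by
  intro k
  induction k with
  | zero =>
      intro P hdeg hdata t ht
      have hz : Finset.Icc 1 0 = (∅ : Finset ℕ) := by decide
      rw [hz, Finset.sum_empty, mul_zero, zero_mul, add_zero]
      have hdeg1 : P.natDegree < 2 := by omega
      have heval : ∀ s : ℝ, P.eval s = P.coeff 0 + P.coeff 1 * s := by
        intro s
        rw [Polynomial.eval_eq_sum_range' hdeg1]
        simp [Finset.sum_range_succ]
      have h0 := hdata 0 le_rfl
      simp only [Nat.mul_zero, Function.iterate_zero_apply] at h0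
      obtain ⟨ha', hb'⟩ := h0
      rw [heval] at ha' hb' ⊢
      obtain ⟨ht1, ht2⟩ := ht
      rw [abs_le] at ha' hb' ⊢
      constructor
      · rcases le_total 0 (P.coeff 1) with h | h
        · nlinarith [mul_nonneg (sub_nonneg.mpr ht1) h]
        · nlinarith [mul_nonpos_of_nonneg_of_nonpos (sub_nonneg.mpr ht2) h]
      · rcases le_total 0 (P.coeff 1) with h | h
        · nlinarith [mul_nonneg (sub_nonneg.mpr ht2) h]
        · nlinarith [mul_nonpos_of_nonneg_of_nonpos (sub_nonneg.mpr ht1) h]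
  | succ k ih =>
      intro P hdeg hdata t ht
      have hba : (0:ℝ) < b - a := by linarith
      have hbane : (b:ℝ) - a ≠ 0 := ne_of_gt hba
      have hπ : (0:ℝ) < Real.pi := Real.pi_pos
      set c : ℝ := Real.pi / (b - a) with hc
      have hcpos : 0 < c := div_pos hπ hba
      set S : ℝ := ∑ l ∈ Finset.Icc 1 k, ((b-a)/Real.pi)^(2*l) with hS
      have hSnn : 0 ≤ S := Finset.sum_nonneg fun l _ => pow_nonneg (by positivity) _
      set C : ℝ := ρ * Real.pi / 2 * S with hC
      have hCnn : 0 ≤ C := by positivity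
      set P₂ : Polynomial ℝ := Polynomial.derivative^[2] P with hP₂
      have hP2deg : P₂.natDegree ≤ 2*k+1 := by
        rw [hP₂]
        exact le_trans (P.natDegree_iterate_derivative 2) (by omega)
      have hit : ∀ l : ℕ, Polynomial.derivative^[2*l] P₂ = Polynomial.derivative^[2*(l+1)] P := by
        intro l
        have h2 : 2*(l+1) = 2*l+2 := by ring
        rw [hP₂, h2, ← Function.iterate_add_apply]
      have hP2data : ∀ l, l ≤ k → |(Polynomial.derivative^[2*l] P₂).eval a| ≤ ρ ∧
          |(Polynomial.derivative^[2*l] P₂).eval b| ≤ ρ := by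
        intro l hl
        rw [hit l]
        exact hdata (l+1) (by omega)
      have IH := ih P₂ hP2deg hP2data
      set K : ℝ := C / c^2 with hK
      have hKnn : 0 ≤ K := div_nonneg hCnn (sq_nonneg c)
      have hKc : K * c^2 = C := by
        rw [hK]; field_simp
      have hub : ∀ s ∈ Set.Icc a b,
          (Polynomial.derivative^[2] P).eval s ≤ ρ + (K * c^2) * Real.sin (c * (s - a)) := by
        intro s hs
        have := IH s hs
        rw [hKc]
        have harg : Real.pi/(b-a) * (s - a) = c * (s - a) := by rw [hc]
        rw [harg] at this
        calc (Polynomial.derivative^[2] P).eval s ≤ |(Polynomial.derivative^[2] P).eval s| :=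
              le_abs_self _
        _ ≤ _ := this
      have hlb : ∀ s ∈ Set.Icc a b,
          (Polynomial.derivative^[2] (-P)).eval s ≤ ρ + (K * c^2) * Real.sin (c * (s - a)) := by
        intro s hs
        have := IH s hs
        rw [hKc]
        have harg : Real.pi/(b-a) * (s - a) = c * (s - a) := by rw [hc]
        rw [harg] at this
        have hneg : (Polynomial.derivative^[2] (-P)).eval s =
            -((Polynomial.derivative^[2] P).eval s) := by
          simp [Function.iterate_succ_apply']
        rw [hneg]
        calc -((Polynomial.derivative^[2] P).eval s) ≤ |(Polynomial.derivative^[2] P).eval s| :=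
              neg_le_abs _
        _ ≤ _ := this
      have hconc1 := lfsc_concave_aux a b ρ K c P hub
      have hconc2 := lfsc_concave_aux a b ρ K c (-P) hlb
      have hedge := hdata 0 (by omega)
      simp only [Nat.mul_zero, Function.iterate_zero_apply] at hedge
      have hPa := abs_le.mp hedge.1
      have hPb := abs_le.mp hedge.2
      have hsinb : Real.sin (c * (b - a)) = 0 := by
        rw [hc, div_mul_cancel₀ _ hbane, Real.sin_pi]
      have hwa1 : 0 ≤ ρ + ρ/2 * ((a - a) * (b - a)) + K * Real.sin (c * (a - a)) + P.eval a := by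
        simp only [sub_self, zero_mul, mul_zero, Real.sin_zero, add_zero]
        linarith [hPa.1]
      have hwb1 : 0 ≤ ρ + ρ/2 * ((b - a) * (b - b)) + K * Real.sin (c * (b - a)) + P.eval b := by
        rw [hsinb]
        simp only [sub_self, mul_zero, add_zero]
        linarith [hPb.1]
      have hwa2 : 0 ≤ ρ + ρ/2 * ((a - a) * (b - a)) + K * Real.sin (c * (a - a)) + (-P).eval a := by
        simp only [sub_self, zero_mul, mul_zero, Real.sin_zero, add_zero, Polynomial.eval_neg]
        linarith [hPa.2]
      have hwb2 : 0 ≤ ρ + ρ/2 * ((b - a) * (b - b)) + K * Real.sin (c * (b - a)) + (-P).eval b := by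
        rw [hsinb]
        simp only [sub_self, mul_zero, add_zero, Polynomial.eval_neg]
        linarith [hPb.2]
      have hw1 : 0 ≤ ρ + ρ/2 * ((t - a) * (b - t)) + K * Real.sin (c * (t - a)) + P.eval t :=
        lfsc_nonneg_of_concave hconc1 hwa1 hwb1 t ht
      have hw2 : 0 ≤ ρ + ρ/2 * ((t - a) * (b - t)) + K * Real.sin (c * (t - a)) - P.eval t := by
        have := lfsc_nonneg_of_concave hconc2 hwa2 hwb2 t ht
        simp only [Polynomial.eval_neg] at this
        linarith [this]
      have hE : |P.eval t| ≤ ρ + ρ/2 * ((t - a) * (b - t)) + K * Real.sin (c * (t - a)) := by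
        rw [abs_le]
        constructor <;> [linarith [hw1]; linarith [hw2]]
      set u : ℝ := (t - a) / (b - a) with hu
      have hu0 : 0 ≤ u := div_nonneg (by linarith [ht.1]) hba.le
      have hu1 : u ≤ 1 := by
        rw [hu, div_le_one hba]
        linarith [ht.2]
      have hsin_id : c * (t - a) = Real.pi * u := by
        rw [hc, hu]; ring
      have hquad_id : (t - a) * (b - t) = (b - a)^2 * (u * (1 - u)) := by
        rw [hu]; field_simp; ring
      have hA : (0:ℝ) ≤ ρ * (b-a)^2 / (2 * Real.pi) := by positivity
      have hmul := mul_le_mul_of_nonneg_left (lfsc_sin_lower hu0 hu1) hA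
      have hEle : ρ/2 * ((t - a) * (b - t)) ≤
          ρ * (b-a)^2 / (2 * Real.pi) * Real.sin (c * (t - a)) := by
        rw [hquad_id, hsin_id]
        calc ρ/2 * ((b - a)^2 * (u * (1 - u)))
            = ρ * (b-a)^2 / (2 * Real.pi) * (Real.pi * (u * (1 - u))) := by
              field_simp
        _ ≤ _ := hmul
      have hT : ∀ m : ℕ, (∑ l ∈ Finset.Icc 1 m, ((b-a)/Real.pi)^(2*l)) =
          ∑ l ∈ Finset.Icc 1 m, (((b-a)/Real.pi)^2)^l :=
        fun m => Finset.sum_congr rfl (fun l _ => pow_mul _ 2 l)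
      have hGC : ρ * Real.pi / 2 * (∑ l ∈ Finset.Icc 1 (k+1), ((b-a)/Real.pi)^(2*l)) =
          ρ * (b-a)^2 / (2 * Real.pi) + K := by
        rw [hT (k+1), lfsc_geom, hK, hC, hS, hT k, hc]
        field_simp
      have harg2 : Real.pi/(b-a) * (t - a) = c * (t - a) := by rw [hc]
      rw [harg2, hGC]
      have hexp : (ρ * (b-a)^2 / (2 * Real.pi) + K) * Real.sin (c * (t - a)) =
          ρ * (b-a)^2 / (2 * Real.pi) * Real.sin (c * (t - a)) +
          K * Real.sin (c * (t - a)) := by ring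
      rw [hexp]
      linarith [hE, hEle]
theorem lidstone_FIF_scaling_continuity
    (p N : ℕ) (hp : 1 ≤ p) (hN : 1 ≤ N)
    (x : ℕ → ℝ) (hx : ∀ n < N, x n < x (n + 1))
    (y : ℕ → ℕ → ℝ)
    (L : ℕ → ℝ → ℝ)
    (hL : ∀ n t, L n t = ((x n - x (n - 1)) / (x N - x 0)) * t +
      (x N * x (n - 1) - x 0 * x n) / (x N - x 0))
    (q : ℕ → ℝ → ℝ → ℝ)
    (hq : ∀ n, 1 ≤ n → n ≤ N → ∀ β : ℝ,
      (∃ P : Polynomial ℝ, P.natDegree ≤ 2 * p + 1 ∧ ∀ t, q n β t = P.eval t) ∧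
      ∀ l ≤ p,
        iteratedDeriv (2 * l) (q n β) (x 0) =
          ((x n - x (n - 1)) / (x N - x 0)) ^ (2 * l) * y (n - 1) l - β * y 0 l ∧
        iteratedDeriv (2 * l) (q n β) (x N) =
          ((x n - x (n - 1)) / (x N - x 0)) ^ (2 * l) * y n l - β * y N l)
    (α' α'' : ℕ → ℝ)
    (hα' : ∀ n, 1 ≤ n → n ≤ N →
      |α' n| < ((x n - x (n - 1)) / (x N - x 0)) ^ (2 * p))
    (hα'' : ∀ n, 1 ≤ n → n ≤ N →
      |α'' n| < ((x n - x (n - 1)) / (x N - x 0)) ^ (2 * p))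
    (ℓ' ℓ'' : ℝ → ℝ)
    (hℓ'cont : ContinuousOn ℓ' (Set.Icc (x 0) (x N)))
    (hℓ''cont : ContinuousOn ℓ'' (Set.Icc (x 0) (x N)))
    (hℓ' : ∀ n, 1 ≤ n → n ≤ N → ∀ t ∈ Set.Icc (x 0) (x N),
      ℓ' (L n t) = α' n * ℓ' t + q n (α' n) t)
    (hℓ'' : ∀ n, 1 ≤ n → n ≤ N → ∀ t ∈ Set.Icc (x 0) (x N),
      ℓ'' (L n t) = α'' n * ℓ'' t + q n (α'' n) t)
    (ρ dα Aα : ℝ)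
    (hρ : ρ = (Finset.range (p + 1)).sup'
      (Finset.nonempty_range_iff.mpr p.succ_ne_zero)
      (fun k => max |y 0 k| |y N k|))
    (hdα : dα = (Finset.Icc 1 N).sup' (Finset.nonempty_Icc.mpr hN)
      (fun n => |α' n - α'' n|))
    (hAα : Aα = (Finset.Icc 1 N).sup' (Finset.nonempty_Icc.mpr hN)
      (fun n => |α' n|)) :
    sSup ((fun t => |ℓ' t - ℓ'' t|) '' Set.Icc (x 0) (x N)) ≤
      (dα / (1 - Aα)) *
        (sSup ((fun t => |ℓ'' t|) '' Set.Icc (x 0) (x N)) +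
          (2 * ρ * Real.pi / 3) *
            ∑ l ∈ Finset.range (p + 1), ((x N - x 0) / Real.pi) ^ (2 * l)) := by
  classical
  have hπ : (0:ℝ) < Real.pi := Real.pi_pos
  have hπ3 : (3:ℝ) < Real.pi := Real.pi_gt_three
  -- monotonicity of the partition
  have hmono : ∀ j, j ≤ N → ∀ i, i ≤ j → x i ≤ x j := by
    intro j
    induction j with
    | zero =>
        intro _ i hi
        have : i = 0 := Nat.le_zero.mp hi
        rw [this]
    | succ j ih =>
        intro hjN i hij
        rcases eq_or_lt_of_le hij with h | h
        · rw [h]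
        · exact le_trans (ih (by omega) i (by omega)) (hx j (by omega)).le
  have h0N : x 0 < x N := lt_of_lt_of_le (hx 0 (by omega)) (hmono N le_rfl 1 hN)
  have hba : (0:ℝ) < x N - x 0 := by linarith
  have hbane : x N - x 0 ≠ 0 := ne_of_gt hba
  -- nonnegativity facts
  have hρnn : 0 ≤ ρ := by
    rw [hρ]
    exact le_trans (abs_nonneg (y 0 0)) (le_trans (le_max_left _ _)
      (Finset.le_sup' (fun k => max |y 0 k| |y N k|)
        (Finset.mem_range.mpr (show 0 < p + 1 by omega))))
  have hyb : ∀ l, l ≤ p → |y 0 l| ≤ ρ ∧ |y N l| ≤ ρ := by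
    intro l hl
    rw [hρ]
    constructor
    · exact le_trans (le_max_left _ _) (Finset.le_sup' (fun k => max |y 0 k| |y N k|)
        (Finset.mem_range.mpr (show l < p + 1 by omega)))
    · exact le_trans (le_max_right _ _) (Finset.le_sup' (fun k => max |y 0 k| |y N k|)
        (Finset.mem_range.mpr (show l < p + 1 by omega)))
  have hmem1 : (1:ℕ) ∈ Finset.Icc 1 N := Finset.mem_Icc.mpr ⟨le_rfl, hN⟩
  have hdnn : 0 ≤ dα := by
    rw [hdα]
    exact le_trans (abs_nonneg (α' 1 - α'' 1)) (Finset.le_sup' (fun n => |α' n - α'' n|) hmem1)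
  have hAnn : 0 ≤ Aα := by
    rw [hAα]
    exact le_trans (abs_nonneg (α' 1)) (Finset.le_sup' (fun n => |α' n|) hmem1)
  have hdub : ∀ n, 1 ≤ n → n ≤ N → |α' n - α'' n| ≤ dα := by
    intro n h1 h2
    rw [hdα]
    exact Finset.le_sup' (fun n => |α' n - α'' n|) (Finset.mem_Icc.mpr ⟨h1, h2⟩)
  have hAub : ∀ n, 1 ≤ n → n ≤ N → |α' n| ≤ Aα := by
    intro n h1 h2
    rw [hAα]
    exact Finset.le_sup' (fun n => |α' n|) (Finset.mem_Icc.mpr ⟨h1, h2⟩)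
  have hA1 : Aα < 1 := by
    rw [hAα]
    rw [Finset.sup'_lt_iff]
    intro n hn
    obtain ⟨h1, h2⟩ := Finset.mem_Icc.mp hn
    refine lt_of_lt_of_le (hα' n h1 h2) ?_
    have hnum0 : 0 ≤ x n - x (n-1) := by
      have := hmono n h2 (n-1) (by omega)
      linarith
    have hnum1 : x n - x (n-1) ≤ x N - x 0 := by
      have ha := hmono (n-1) (by omega) 0 (by omega)
      have hb := hmono N le_rfl n h2
      linarith
    exact pow_le_one₀ (div_nonneg hnum0 hba.le) ((div_le_one hba).mpr hnum1)
  have h1A : (0:ℝ) < 1 - Aα := by linarith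
  -- sums
  have hsumnn : 0 ≤ ∑ l ∈ Finset.range (p+1), ((x N - x 0)/Real.pi)^(2*l) :=
    Finset.sum_nonneg fun l _ => pow_nonneg (by positivity) _
  have hTnn : 0 ≤ ∑ l ∈ Finset.Icc 1 p, ((x N - x 0)/Real.pi)^(2*l) :=
    Finset.sum_nonneg fun l _ => pow_nonneg (by positivity) _
  have hRT : ∑ l ∈ Finset.range (p+1), ((x N - x 0)/Real.pi)^(2*l) =
      1 + ∑ l ∈ Finset.Icc 1 p, ((x N - x 0)/Real.pi)^(2*l) := by
    rw [Finset.range_eq_Ico, Finset.sum_eq_sum_Ico_succ_bot (by omega : 0 < p + 1)]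
    rw [Finset.Ico_add_one_right_eq_Icc]
    norm_num
  set M : ℝ := (2 * ρ * Real.pi / 3) *
      ∑ l ∈ Finset.range (p + 1), ((x N - x 0) / Real.pi) ^ (2 * l) with hM
  have hMnn : 0 ≤ M := mul_nonneg (by positivity) hsumnn
  -- sup facts
  have hIcpt : IsCompact (Set.Icc (x 0) (x N)) := isCompact_Icc
  have hmem0 : x 0 ∈ Set.Icc (x 0) (x N) := ⟨le_rfl, h0N.le⟩
  have hcont1 : ContinuousOn (fun t => |ℓ' t - ℓ'' t|) (Set.Icc (x 0) (x N)) :=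
    (hℓ'cont.sub hℓ''cont).abs
  have hcont2 : ContinuousOn (fun t => |ℓ'' t|) (Set.Icc (x 0) (x N)) := hℓ''cont.abs
  have hbdd1 : BddAbove ((fun t => |ℓ' t - ℓ'' t|) '' Set.Icc (x 0) (x N)) :=
    hIcpt.bddAbove_image hcont1
  have hbdd2 : BddAbove ((fun t => |ℓ'' t|) '' Set.Icc (x 0) (x N)) :=
    hIcpt.bddAbove_image hcont2
  have hne1 : ((fun t => |ℓ' t - ℓ'' t|) '' Set.Icc (x 0) (x N)).Nonempty :=
    ⟨_, Set.mem_image_of_mem _ hmem0⟩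
  set S1 : ℝ := sSup ((fun t => |ℓ' t - ℓ'' t|) '' Set.Icc (x 0) (x N)) with hS1
  set S2 : ℝ := sSup ((fun t => |ℓ'' t|) '' Set.Icc (x 0) (x N)) with hS2
  have hS1ub : ∀ t ∈ Set.Icc (x 0) (x N), |ℓ' t - ℓ'' t| ≤ S1 :=
    fun t ht => le_csSup hbdd1 ⟨t, ht, rfl⟩
  have hS2ub : ∀ t ∈ Set.Icc (x 0) (x N), |ℓ'' t| ≤ S2 :=
    fun t ht => le_csSup hbdd2 ⟨t, ht, rfl⟩
  have hS2nn : 0 ≤ S2 := le_trans (abs_nonneg _) (hS2ub (x 0) hmem0)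
  -- finding the subinterval
  have hfind : ∀ t, x 0 ≤ t → t ≤ x N → ∃ n, 1 ≤ n ∧ n ≤ N ∧ x (n-1) ≤ t ∧ t ≤ x n := by
    intro t ht0 htN
    have hex : ∃ k, t ≤ x (k+1) := by
      refine ⟨N - 1, ?_⟩
      have hNN : N - 1 + 1 = N := by omega
      rw [hNN]
      exact htN
    refine ⟨Nat.find hex + 1, by omega, ?_, ?_, Nat.find_spec hex⟩
    · have := Nat.find_min' hex hex.choose_spec
      have h2 : Nat.find hex ≤ N - 1 := Nat.find_min' hex (by
        have hNN : N - 1 + 1 = N := by omega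
        rw [hNN]
        exact htN)
      omega
    · simp only [Nat.add_sub_cancel]
      rcases Nat.eq_zero_or_pos (Nat.find hex) with h0 | hpos
      · rw [h0]; exact ht0
      · have hmin := Nat.find_min hex (m := Nat.find hex - 1) (by omega)
        have hmm : Nat.find hex - 1 + 1 = Nat.find hex := by omega
        rw [hmm] at hmin
        exact (lt_of_not_ge hmin).le
  -- bound on the difference of the q polynomials
  have hqkey : ∀ n, 1 ≤ n → n ≤ N → ∀ s ∈ Set.Icc (x 0) (x N),
      |q n (α' n) s - q n (α'' n) s| ≤ dα * M := by
    intro n hn1 hnN s hs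
    obtain ⟨⟨P1, hd1, he1⟩, hD1⟩ := hq n hn1 hnN (α' n)
    obtain ⟨⟨P2, hd2, he2⟩, hD2⟩ := hq n hn1 hnN (α'' n)
    have hbridge : ∀ (P : Polynomial ℝ) (g : ℝ → ℝ), (∀ t, g t = P.eval t) →
        ∀ (m : ℕ) (t : ℝ), iteratedDeriv m g t = (Polynomial.derivative^[m] P).eval t := by
      intro P g hg m t
      have hg' : g = fun t => P.eval t := funext hg
      rw [hg', lfsc_iteratedDeriv_polyeval]
    have hdeg : (P1 - P2).natDegree ≤ 2*p+1 :=
      le_trans (Polynomial.natDegree_sub_le P1 P2) (max_le hd1 hd2)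
    have hdata : ∀ l, l ≤ p → |(Polynomial.derivative^[2*l] (P1 - P2)).eval (x 0)| ≤ dα * ρ ∧
        |(Polynomial.derivative^[2*l] (P1 - P2)).eval (x N)| ≤ dα * ρ := by
      intro l hl
      have habs : ∀ z : ℝ, |(α'' n - α' n) * z| ≤ dα * ρ → True := fun _ _ => trivial
      have e1a : (Polynomial.derivative^[2*l] P1).eval (x 0) =
          ((x n - x (n - 1)) / (x N - x 0)) ^ (2 * l) * y (n - 1) l - α' n * y 0 l := by
        rw [← hbridge P1 (q n (α' n)) he1 (2*l) (x 0)]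
        exact (hD1 l hl).1
      have e2a : (Polynomial.derivative^[2*l] P2).eval (x 0) =
          ((x n - x (n - 1)) / (x N - x 0)) ^ (2 * l) * y (n - 1) l - α'' n * y 0 l := by
        rw [← hbridge P2 (q n (α'' n)) he2 (2*l) (x 0)]
        exact (hD2 l hl).1
      have e1b : (Polynomial.derivative^[2*l] P1).eval (x N) =
          ((x n - x (n - 1)) / (x N - x 0)) ^ (2 * l) * y n l - α' n * y N l := by
        rw [← hbridge P1 (q n (α' n)) he1 (2*l) (x N)]
        exact (hD1 l hl).2
      have e2b : (Polynomial.derivative^[2*l] P2).eval (x N) =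
          ((x n - x (n - 1)) / (x N - x 0)) ^ (2 * l) * y n l - α'' n * y N l := by
        rw [← hbridge P2 (q n (α'' n)) he2 (2*l) (x N)]
        exact (hD2 l hl).2
      have hbnd : |α' n - α'' n| ≤ dα := hdub n hn1 hnN
      constructor
      · rw [Polynomial.iterate_derivative_sub, Polynomial.eval_sub, e1a, e2a]
        have : ((x n - x (n - 1)) / (x N - x 0)) ^ (2 * l) * y (n - 1) l - α' n * y 0 l -
            (((x n - x (n - 1)) / (x N - x 0)) ^ (2 * l) * y (n - 1) l - α'' n * y 0 l) =
            -((α' n - α'' n) * y 0 l) := by ring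
        rw [this, abs_neg, abs_mul]
        exact mul_le_mul hbnd (hyb l hl).1 (abs_nonneg _) hdnn
      · rw [Polynomial.iterate_derivative_sub, Polynomial.eval_sub, e1b, e2b]
        have : ((x n - x (n - 1)) / (x N - x 0)) ^ (2 * l) * y n l - α' n * y N l -
            (((x n - x (n - 1)) / (x N - x 0)) ^ (2 * l) * y n l - α'' n * y N l) =
            -((α' n - α'' n) * y N l) := by ring
        rw [this, abs_neg, abs_mul]
        exact mul_le_mul hbnd (hyb l hl).2 (abs_nonneg _) hdnn
    have hkey := lfsc_key (x 0) (x N) (dα * ρ) h0N (mul_nonneg hdnn hρnn) p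
      (P1 - P2) hdeg hdata s hs
    have heq : q n (α' n) s - q n (α'' n) s = (P1 - P2).eval s := by
      rw [he1 s, he2 s, Polynomial.eval_sub]
    rw [heq]
    have hsin1 : Real.sin (Real.pi/(x N - x 0) * (s - x 0)) ≤ 1 := Real.sin_le_one _
    have hcoef : 0 ≤ dα * ρ * Real.pi / 2 * ∑ l ∈ Finset.Icc 1 p, ((x N - x 0)/Real.pi)^(2*l) :=
      mul_nonneg (by positivity) hTnn
    have hstep : |(P1 - P2).eval s| ≤ dα * ρ +
        dα * ρ * Real.pi / 2 * ∑ l ∈ Finset.Icc 1 p, ((x N - x 0)/Real.pi)^(2*l) := by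
      refine le_trans hkey ?_
      have := mul_le_of_le_one_right hcoef hsin1
      linarith
    refine le_trans hstep ?_
    rw [hM, hRT]
    set T := ∑ l ∈ Finset.Icc 1 p, ((x N - x 0)/Real.pi)^(2*l)
    have hdρ : 0 ≤ dα * ρ := mul_nonneg hdnn hρnn
    have hdρT : 0 ≤ dα * ρ * T := mul_nonneg hdρ hTnn
    nlinarith [hdρ, hdρT, hπ3]
  -- the main estimate
  have hclaim : ∀ t ∈ Set.Icc (x 0) (x N), |ℓ' t - ℓ'' t| ≤ Aα * S1 + dα * (S2 + M) := by
    intro t ht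
    obtain ⟨n, hn1, hnN, htl, htr⟩ := hfind t ht.1 ht.2
    have hd : (0:ℝ) < x n - x (n-1) := by
      have h := hx (n-1) (by omega)
      have hnn : n - 1 + 1 = n := by omega
      rw [hnn] at h
      linarith
    set s : ℝ := x 0 + (t - x (n-1)) * (x N - x 0) / (x n - x (n-1)) with hsdef
    have hs0 : x 0 ≤ s := by
      rw [hsdef]
      have : 0 ≤ (t - x (n-1)) * (x N - x 0) / (x n - x (n-1)) :=
        div_nonneg (mul_nonneg (by linarith) hba.le) hd.le
      linarith
    have hsN : s ≤ x N := by
      rw [hsdef]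
      have h1 : (t - x (n-1)) * (x N - x 0) / (x n - x (n-1)) ≤ x N - x 0 := by
        rw [div_le_iff₀ hd]
        nlinarith [htr, hba]
      linarith
    have hsmem : s ∈ Set.Icc (x 0) (x N) := ⟨hs0, hsN⟩
    have hLs : L n s = t := by
      rw [hL n s, hsdef]
      field_simp
      ring
    have e1 := hℓ' n hn1 hnN s hsmem
    have e2 := hℓ'' n hn1 hnN s hsmem
    have hsplit : ℓ' (L n s) - ℓ'' (L n s) = α' n * (ℓ' s - ℓ'' s) +
        (α' n - α'' n) * ℓ'' s + (q n (α' n) s - q n (α'' n) s) := by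
      rw [e1, e2]
      ring
    have habs : |ℓ' t - ℓ'' t| ≤ |α' n| * |ℓ' s - ℓ'' s| + |α' n - α'' n| * |ℓ'' s| +
        |q n (α' n) s - q n (α'' n) s| := by
      rw [← hLs, hsplit]
      have h1 := abs_add_le (α' n * (ℓ' s - ℓ'' s) + (α' n - α'' n) * ℓ'' s)
        (q n (α' n) s - q n (α'' n) s)
      have h2 := abs_add_le (α' n * (ℓ' s - ℓ'' s)) ((α' n - α'' n) * ℓ'' s)
      rw [abs_mul, abs_mul] at h2
      linarith
    refine le_trans habs ?_
    have b1 : |α' n| * |ℓ' s - ℓ'' s| ≤ Aα * S1 :=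
      mul_le_mul (hAub n hn1 hnN) (hS1ub s hsmem) (abs_nonneg _) hAnn
    have b2 : |α' n - α'' n| * |ℓ'' s| ≤ dα * S2 :=
      mul_le_mul (hdub n hn1 hnN) (hS2ub s hsmem) (abs_nonneg _) hdnn
    have b3 := hqkey n hn1 hnN s hsmem
    have : Aα * S1 + dα * S2 + dα * M = Aα * S1 + dα * (S2 + M) := by ring
    linarith
  have hfin : S1 ≤ Aα * S1 + dα * (S2 + M) := by
    rw [hS1]
    apply csSup_le hne1
    rintro z ⟨t, ht, rfl⟩
    exact hclaim t ht
  rw [div_mul_eq_mul_div, le_div_iff₀ h1A]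
  have hexp : S1 * (1 - Aα) = S1 - Aα * S1 := by ring
  rw [hexp]
  linarith
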